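/- Translation soundness for mixins: let M ≡ λc.Y(λt.λs.(c s) ⊕ R) be a mixin (with R a record whose free variables are contained in {c, t, s}), and suppose there are types σ, ρ₁, ρ₂ ∈ 𝕋 not containing + and with all labels in 𝓛, with lbl(ρ₂) = lbl(R), such that ⊢ M : (σ → ρ∩ρ₁) → (σ → ρ+ρ₂) is derivable in Λ_R for every record type ρ ∈ 𝕋_R. Define the 𝕋_C type τ_M ≡ ((⟦σ⟧→⟦ρ₁⟧) → (⟦σ⟧→⟦ρ₂⟧)) ∩ ⋂_{l ∈ 𝓛∖lbl(R)} ((⟦σ⟧→⟨⟨l(α_l)⟩⟩) → (⟦σ⟧→⟨⟨l(α_l)⟩⟩)), where the α_l are distinct type variables. Then for every substitution S of type variables by 𝕋_C types and every type τ ∈ 𝕋 such that ⟦τ⟧ = S(τ_M) (syntactically), the judgment ⊢ M : τ is derivable in Λ_R. -/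

import Mathlib

/-- Terms of the record calculus `Λ_R`, with de Bruijn indices for bound variables
(so that terms are identified up to α-conversion) and labels drawn from `ℕ`.
Records are finite lists of label/term pairs; in `merge M fs` the right operand
is syntactically a record. -/
inductive Tm where
  | var : Nat → Tm
  | lam : Tm → Tm
  | app : Tm → Tm → Tm
  | sel : Tm → Nat → Tm
  | rcd : List (Nat × Tm) → Tm
  | merge : Tm → List (Nat × Tm) → Tm

namespace Tm

/-- The list of field labels of a record. -/
def keys (fs : List (Nat × Tm)) : List Nat := fs.map Prod.fst

/-- The set of field labels `lbl(R)` of a record. -/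
def lblR (fs : List (Nat × Tm)) : Finset Nat := (keys fs).toFinset

/-- Record merge on field lists: fields of the first record whose label does not
occur in the second record, followed by all fields of the second record. -/
def mergeFields (fs gs : List (Nat × Tm)) : List (Nat × Tm) :=
  fs.filter (fun p => decide (p.1 ∉ keys gs)) ++ gs

end Tm
/-- Intersection and record types `𝕋`. Record types are the types satisfying `IsRec`. -/
inductive Ty where
  | const : Nat → Ty
  | omega : Ty
  | arrow : Ty → Ty → Ty
  | inter : Ty → Ty → Ty
  | empty : Ty
  | fld : Nat → Ty → Ty
  | merge : Ty → Ty → Ty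
deriving DecidableEq

/-- The record types `𝕋_R ⊆ 𝕋`. -/
inductive IsRec : Ty → Prop where
  | empty : IsRec .empty
  | fld (l : Nat) (σ : Ty) : IsRec (.fld l σ)
  | merge {ρ₁ ρ₂ : Ty} : IsRec ρ₁ → IsRec ρ₂ → IsRec (.merge ρ₁ ρ₂)
  | inter {ρ₁ ρ₂ : Ty} : IsRec ρ₁ → IsRec ρ₂ → IsRec (.inter ρ₁ ρ₂)

/-- Subtyping on `𝕋`: the least preorder satisfying the BCD axioms together with
the record and record-merge axioms. -/
inductive TySub : Ty → Ty → Prop where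
  | refl (σ : Ty) : TySub σ σ
  | trans {σ τ υ : Ty} : TySub σ τ → TySub τ υ → TySub σ υ
  | le_omega (σ : Ty) : TySub σ .omega
  | omega_arrow : TySub .omega (.arrow .omega .omega)
  | inter_left (σ τ : Ty) : TySub (.inter σ τ) σ
  | inter_right (σ τ : Ty) : TySub (.inter σ τ) τ
  | le_inter {σ τ₁ τ₂ : Ty} : TySub σ τ₁ → TySub σ τ₂ → TySub σ (.inter τ₁ τ₂)
  | arrow_inter (σ τ₁ τ₂ : Ty) :
      TySub (.inter (.arrow σ τ₁) (.arrow σ τ₂)) (.arrow σ (.inter τ₁ τ₂))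
  | arrow_mono {σ₁ σ₂ τ₁ τ₂ : Ty} : TySub σ₂ σ₁ → TySub τ₁ τ₂ →
      TySub (.arrow σ₁ τ₁) (.arrow σ₂ τ₂)
  | fld_empty (l : Nat) (σ : Ty) : TySub (.fld l σ) .empty
  | fld_inter (l : Nat) (σ τ : Ty) :
      TySub (.inter (.fld l σ) (.fld l τ)) (.fld l (.inter σ τ))
  | fld_mono {σ τ : Ty} (l : Nat) : TySub σ τ → TySub (.fld l σ) (.fld l τ)
  | merge_empty_r {ρ : Ty} : IsRec ρ → TySub (.merge ρ .empty) ρ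
  | merge_empty_r' {ρ : Ty} : IsRec ρ → TySub ρ (.merge ρ .empty)
  | merge_empty_l {ρ : Ty} : IsRec ρ → TySub (.merge .empty ρ) ρ
  | merge_empty_l' {ρ : Ty} : IsRec ρ → TySub ρ (.merge .empty ρ)
  | merge_assoc {ρ₁ ρ₂ ρ₃ : Ty} : IsRec ρ₁ → IsRec ρ₂ → IsRec ρ₃ →
      TySub (.merge (.merge ρ₁ ρ₂) ρ₃) (.merge ρ₁ (.merge ρ₂ ρ₃))
  | merge_assoc' {ρ₁ ρ₂ ρ₃ : Ty} : IsRec ρ₁ → IsRec ρ₂ → IsRec ρ₃ →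
      TySub (.merge ρ₁ (.merge ρ₂ ρ₃)) (.merge (.merge ρ₁ ρ₂) ρ₃)
  | merge_inter {ρ₁ ρ₂ ρ₃ : Ty} : IsRec ρ₁ → IsRec ρ₂ → IsRec ρ₃ →
      TySub (.merge (.inter ρ₁ ρ₂) ρ₃) (.inter (.merge ρ₁ ρ₃) (.merge ρ₂ ρ₃))
  | merge_inter' {ρ₁ ρ₂ ρ₃ : Ty} : IsRec ρ₁ → IsRec ρ₂ → IsRec ρ₃ →
      TySub (.inter (.merge ρ₁ ρ₃) (.merge ρ₂ ρ₃)) (.merge (.inter ρ₁ ρ₂) ρ₃)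
  | fld_absorb {ρ : Ty} (l : Nat) (σ τ : Ty) : IsRec ρ →
      TySub (.merge (.fld l σ) (.inter (.fld l τ) ρ)) (.inter (.fld l τ) ρ)
  | fld_absorb' {ρ : Ty} (l : Nat) (σ τ : Ty) : IsRec ρ →
      TySub (.inter (.fld l τ) ρ) (.merge (.fld l σ) (.inter (.fld l τ) ρ))
  | fld_comm {ρ : Ty} {l l' : Nat} (σ τ : Ty) : l ≠ l' → IsRec ρ →
      TySub (.merge (.fld l σ) (.inter (.fld l' τ) ρ))
          (.inter (.fld l' τ) (.merge (.fld l σ) ρ))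
  | fld_comm' {ρ : Ty} {l l' : Nat} (σ τ : Ty) : l ≠ l' → IsRec ρ →
      TySub (.inter (.fld l' τ) (.merge (.fld l σ) ρ))
          (.merge (.fld l σ) (.inter (.fld l' τ) ρ))
  | merge_mono_l {ρ₁ ρ₂ ρ : Ty} : IsRec ρ₁ → IsRec ρ₂ → IsRec ρ →
      TySub ρ₁ ρ₂ → TySub (.merge ρ₁ ρ) (.merge ρ₂ ρ)
  | merge_congr_r {ρ ρ₁ ρ₂ : Ty} : IsRec ρ → IsRec ρ₁ → IsRec ρ₂ →
      TySub ρ₁ ρ₂ → TySub ρ₂ ρ₁ → TySub (.merge ρ ρ₁) (.merge ρ ρ₂)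

/-- Type equality: mutual subtyping. -/
def TyEq (σ τ : Ty) : Prop := TySub σ τ ∧ TySub τ σ
/-- The label map on record types. -/
def lbl : Ty → Finset Nat
  | .const _ => ∅
  | .omega => ∅
  | .arrow _ _ => ∅
  | .empty => ∅
  | .fld l _ => {l}
  | .inter ρ₁ ρ₂ => lbl ρ₁ ∪ lbl ρ₂
  | .merge ρ₁ ρ₂ => lbl ρ₁ ∪ lbl ρ₂
/-- The type assignment system for `Λ_R`. With de Bruijn indices, a basis `Γ` is a
list of types, extension `Γ, x:σ` is `σ :: Γ`, and the axiom rule looks up the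
type of a variable index in `Γ`. -/
inductive Typing : List Ty → Tm → Ty → Prop where
  | var {Γ : List Ty} {x : Nat} {σ : Ty} :
      Γ[x]? = some σ → Typing Γ (.var x) σ
  | lam {Γ : List Ty} {M : Tm} {σ τ : Ty} :
      Typing (σ :: Γ) M τ → Typing Γ (.lam M) (.arrow σ τ)
  | app {Γ : List Ty} {M N : Tm} {σ τ : Ty} :
      Typing Γ M (.arrow σ τ) → Typing Γ N σ → Typing Γ (.app M N) τ
  | inter {Γ : List Ty} {M : Tm} {σ τ : Ty} :
      Typing Γ M σ → Typing Γ M τ → Typing Γ M (.inter σ τ)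
  | omega {Γ : List Ty} (M : Tm) : Typing Γ M .omega
  | sub {Γ : List Ty} {M : Tm} {σ τ : Ty} :
      Typing Γ M σ → TySub σ τ → Typing Γ M τ
  | empty {Γ : List Ty} (fs : List (Nat × Tm)) : Typing Γ (.rcd fs) .empty
  | rcd {Γ : List Ty} {fs : List (Nat × Tm)} {l : Nat} {M : Tm} {σ : Ty} :
      List.lookup l fs = some M → Typing Γ M σ → Typing Γ (.rcd fs) (.fld l σ)
  | sel {Γ : List Ty} {M : Tm} {l : Nat} {σ : Ty} :
      Typing Γ M (.fld l σ) → Typing Γ (.sel M l) σ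
  | merge {Γ : List Ty} {M : Tm} {fs : List (Nat × Tm)} {ρ₁ ρ₂ : Ty} :
      Typing Γ M ρ₁ → Typing Γ (.rcd fs) ρ₂ → IsRec ρ₁ → IsRec ρ₂ →
      Tm.lblR fs = lbl ρ₂ → Typing Γ (.merge M fs) (.merge ρ₁ ρ₂)
/-- `FVBelow k M`: all free (de Bruijn) variables of `M` are `< k`. -/
inductive FVBelow : Nat → Tm → Prop where
  | var {k x : Nat} : x < k → FVBelow k (.var x)
  | lam {k : Nat} {M : Tm} : FVBelow (k + 1) M → FVBelow k (.lam M)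
  | app {k : Nat} {M N : Tm} : FVBelow k M → FVBelow k N → FVBelow k (.app M N)
  | sel {k : Nat} {M : Tm} (l : Nat) : FVBelow k M → FVBelow k (.sel M l)
  | rcd {k : Nat} {fs : List (Nat × Tm)} :
      (∀ p ∈ fs, FVBelow k p.2) → FVBelow k (.rcd fs)
  | merge {k : Nat} {M : Tm} {fs : List (Nat × Tm)} :
      FVBelow k M → (∀ p ∈ fs, FVBelow k p.2) → FVBelow k (.merge M fs)

/-- Curry's fixed point combinator `Y ≡ λf.(λx.f(x x))(λx.f(x x))`. -/
def Ycomb : Tm :=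
  .lam (.app (.lam (.app (.var 1) (.app (.var 0) (.var 0))))
             (.lam (.app (.var 1) (.app (.var 0) (.var 0)))))

/-- The mixin `M ≡ λc. Y (λt. λs. (c s) ⊕ R)` determined by the difference record `R`.
Under the three binders, `c` is de Bruijn index 2, `t` is 1 and `s` is 0. -/
def mixinTm (R : List (Nat × Tm)) : Tm :=
  .lam (.app Ycomb (.lam (.lam (.merge (.app (.var 2) (.var 0)) R))))
/-- Intersection types with constructors `𝕋_C`: constants, type variables, `ω`,
arrows, intersections and unary constructors (constructor names in `Option ℕ`: `none` is the distinguished record constructor `⟨⟨·⟩⟩` and `some l` is the label constructor `l(·)` for a label `l`). -/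
inductive TyC where
  | const : Nat → TyC
  | tvar : Nat → TyC
  | omega : TyC
  | arrow : TyC → TyC → TyC
  | inter : TyC → TyC → TyC
  | ctor : Option Nat → TyC → TyC
deriving DecidableEq

/-- Subtyping on `𝕋_C`: the least preorder with the BCD axioms together with
covariance of constructors and distribution of constructors over intersection. -/
inductive SubC : TyC → TyC → Prop where
  | refl (σ : TyC) : SubC σ σ
  | trans {σ τ υ : TyC} : SubC σ τ → SubC τ υ → SubC σ υ
  | le_omega (σ : TyC) : SubC σ .omega
  | omega_arrow : SubC .omega (.arrow .omega .omega)
  | inter_left (σ τ : TyC) : SubC (.inter σ τ) σ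
  | inter_right (σ τ : TyC) : SubC (.inter σ τ) τ
  | le_inter {σ τ₁ τ₂ : TyC} : SubC σ τ₁ → SubC σ τ₂ → SubC σ (.inter τ₁ τ₂)
  | arrow_inter (σ τ₁ τ₂ : TyC) :
      SubC (.inter (.arrow σ τ₁) (.arrow σ τ₂)) (.arrow σ (.inter τ₁ τ₂))
  | arrow_mono {σ₁ σ₂ τ₁ τ₂ : TyC} : SubC σ₂ σ₁ → SubC τ₁ τ₂ →
      SubC (.arrow σ₁ τ₁) (.arrow σ₂ τ₂)
  | ctor_mono {τ₁ τ₂ : TyC} (c : Option Nat) : SubC τ₁ τ₂ → SubC (.ctor c τ₁) (.ctor c τ₂)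
  | ctor_inter (c : Option Nat) (τ₁ τ₂ : TyC) :
      SubC (.inter (.ctor c τ₁) (.ctor c τ₂)) (.ctor c (.inter τ₁ τ₂))

/-- Type equality on `𝕋_C`: mutual subtyping. -/
def TyCEq (σ τ : TyC) : Prop := SubC σ τ ∧ SubC τ σ

/-- Finite intersection of a list of `𝕋_C` types (`ω` for the empty list). -/
def interListC : List TyC → TyC
  | [] => .omega
  | [π] => π
  | π :: π' :: rest => .inter π (interListC (π' :: rest))
/-- The partial translation `⟦·⟧ : 𝕋 → 𝕋_C` relative to the finite label set `𝓛`: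
defined homomorphically on constants, `ω`, arrows and intersections, with
`⟦⟨l:τ⟩⟧ = ⟨⟨l(⟦τ⟧)⟩⟩` for `l ∈ 𝓛` and `⟦⟨⟩⟧ = ⟨⟨ω⟩⟩`; undefined (`none`) on types
containing the record-merge type constructor `+` or a label outside `𝓛`. -/
def interp (L : Finset Nat) : Ty → Option TyC
  | .const a => some (.const a)
  | .omega => some .omega
  | .arrow σ τ => do
      let s ← interp L σ
      let t ← interp L τ
      pure (.arrow s t)
  | .inter σ τ => do
      let s ← interp L σ
      let t ← interp L τ
      pure (.inter s t)
  | .empty => some (.ctor none .omega)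
  | .fld l σ =>
      if l ∈ L then (interp L σ).map (fun t => .ctor none (.ctor (some l) t))
      else none
  | .merge _ _ => none

/-- Application of a substitution of type variables by `𝕋_C` types. -/
def substC (S : Nat → TyC) : TyC → TyC
  | .const a => .const a
  | .tvar α => S α
  | .omega => .omega
  | .arrow σ τ => .arrow (substC S σ) (substC S τ)
  | .inter σ τ => .inter (substC S σ) (substC S τ)
  | .ctor c τ => .ctor c (substC S τ)

/-- The schematic combinator type
`τ_M ≡ ((⟦σ⟧→⟦ρ₁⟧) → (⟦σ⟧→⟦ρ₂⟧)) ∩ ⋂_{l ∈ 𝓛∖lbl(R)} ((⟦σ⟧→⟨⟨l(α_l)⟩⟩) → (⟦σ⟧→⟨⟨l(α_l)⟩⟩))`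
of a mixin with difference record `R`, where the pairwise distinct type
variables `α_l` are indexed by the labels `l` themselves. -/
def tauM (L : Finset Nat) (R : List (Nat × Tm)) (σ' ρ₁' ρ₂' : TyC) : TyC :=
  .inter (.arrow (.arrow σ' ρ₁') (.arrow σ' ρ₂'))
    (interListC (((L \ Tm.lblR R).sort (· ≤ ·)).map fun l =>
      .arrow (.arrow σ' (.ctor none (.ctor (some l) (.tvar l))))
             (.arrow σ' (.ctor none (.ctor (some l) (.tvar l))))))

section Aux

variable {L : Finset Nat}

lemma interp_arrow_def (σ τ : Ty) :
    interp L (.arrow σ τ) = (interp L σ).bind fun s => (interp L τ).map (TyC.arrow s) := by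
  cases h1 : interp L σ <;> cases h2 : interp L τ <;> simp [interp, h1, h2]

lemma interp_inter_def (σ τ : Ty) :
    interp L (.inter σ τ) = (interp L σ).bind fun s => (interp L τ).map (TyC.inter s) := by
  cases h1 : interp L σ <;> cases h2 : interp L τ <;> simp [interp, h1, h2]

/-- `substC` is the identity on types in the image of `interp`. -/
lemma interp_subst (S : Nat → TyC) : ∀ (σ : Ty) (t : TyC), interp L σ = some t → substC S t = t := by
  intro σ
  induction σ with
  | const a => intro t h; simp [interp] at h; subst h; rfl
  | omega => intro t h; simp [interp] at h; subst h; rfl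
  | arrow σ τ ih1 ih2 =>
    intro t h
    rw [interp_arrow_def] at h
    simp only [Option.bind_eq_some_iff, Option.map_eq_some_iff] at h
    obtain ⟨s, hs, t', ht', rfl⟩ := h
    simp [substC, ih1 _ hs, ih2 _ ht']
  | inter σ τ ih1 ih2 =>
    intro t h
    rw [interp_inter_def] at h
    simp only [Option.bind_eq_some_iff, Option.map_eq_some_iff] at h
    obtain ⟨s, hs, t', ht', rfl⟩ := h
    simp [substC, ih1 _ hs, ih2 _ ht']
  | empty => intro t h; simp [interp] at h; subst h; rfl
  | fld l σ ih =>
    intro t h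
    by_cases hl : l ∈ L
    · simp only [interp, hl, if_true, Option.map_eq_some_iff] at h
      obtain ⟨u, hu, rfl⟩ := h
      simp [substC, ih _ hu]
    · simp [interp, hl] at h
  | merge σ τ _ _ => intro t h; simp [interp] at h

/-- Partial inverse to `interp`. -/
def uninterp : TyC → Option Ty
  | .const a => some (.const a)
  | .tvar _ => none
  | .omega => some .omega
  | .arrow s t => do
      let a ← uninterp s
      let b ← uninterp t
      pure (.arrow a b)
  | .inter s t => do
      let a ← uninterp s
      let b ← uninterp t
      pure (.inter a b)
  | .ctor none .omega => some .empty
  | .ctor none (.ctor (some l) t) => (uninterp t).map (.fld l)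
  | .ctor _ _ => none

lemma uninterp_interp : ∀ (σ : Ty) (t : TyC), interp L σ = some t → uninterp t = some σ := by
  intro σ
  induction σ with
  | const a => intro t h; simp [interp] at h; subst h; rfl
  | omega => intro t h; simp [interp] at h; subst h; rfl
  | arrow σ τ ih1 ih2 =>
    intro t h
    rw [interp_arrow_def] at h
    simp only [Option.bind_eq_some_iff, Option.map_eq_some_iff] at h
    obtain ⟨s, hs, t', ht', rfl⟩ := h
    simp [uninterp, ih1 _ hs, ih2 _ ht']
  | inter σ τ ih1 ih2 =>
    intro t h
    rw [interp_inter_def] at h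
    simp only [Option.bind_eq_some_iff, Option.map_eq_some_iff] at h
    obtain ⟨s, hs, t', ht', rfl⟩ := h
    simp [uninterp, ih1 _ hs, ih2 _ ht']
  | empty => intro t h; simp [interp] at h; subst h; rfl
  | fld l σ ih =>
    intro t h
    by_cases hl : l ∈ L
    · simp only [interp, hl, if_true, Option.map_eq_some_iff] at h
      obtain ⟨u, hu, rfl⟩ := h
      simp [uninterp, ih _ hu]
    · simp [interp, hl] at h
  | merge σ τ _ _ => intro t h; simp [interp] at h

/-- `interp` is injective on its domain. -/
lemma interp_inj {σ τ : Ty} {t : TyC} (h1 : interp L σ = some t) (h2 : interp L τ = some t) :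
    σ = τ := by
  have e1 := uninterp_interp σ t h1
  have e2 := uninterp_interp τ t h2
  rw [e1] at e2
  exact Option.some.inj e2

lemma interp_arrow_inv {τ : Ty} {a b : TyC} (h : interp L τ = some (.arrow a b)) :
    ∃ τ1 τ2, τ = Ty.arrow τ1 τ2 ∧ interp L τ1 = some a ∧ interp L τ2 = some b := by
  cases τ with
  | arrow τ1 τ2 =>
    rw [interp_arrow_def] at h
    simp only [Option.bind_eq_some_iff, Option.map_eq_some_iff] at h
    obtain ⟨s, hs, t', ht', he⟩ := h
    cases he
    exact ⟨τ1, τ2, rfl, hs, ht'⟩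
  | fld l σ =>
    by_cases hl : l ∈ L
    · simp [interp, hl, Option.map_eq_some_iff] at h
    · simp [interp, hl] at h
  | inter τ1 τ2 =>
    rw [interp_inter_def] at h
    simp only [Option.bind_eq_some_iff, Option.map_eq_some_iff] at h
    obtain ⟨s, hs, t', ht', he⟩ := h
    cases he
  | const a => simp [interp] at h
  | omega => simp [interp] at h
  | empty => simp [interp] at h
  | merge τ1 τ2 => simp [interp] at h

lemma interp_inter_inv {τ : Ty} {a b : TyC} (h : interp L τ = some (.inter a b)) :
    ∃ τ1 τ2, τ = Ty.inter τ1 τ2 ∧ interp L τ1 = some a ∧ interp L τ2 = some b := by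
  cases τ with
  | inter τ1 τ2 =>
    rw [interp_inter_def] at h
    simp only [Option.bind_eq_some_iff, Option.map_eq_some_iff] at h
    obtain ⟨s, hs, t', ht', he⟩ := h
    cases he
    exact ⟨τ1, τ2, rfl, hs, ht'⟩
  | fld l σ =>
    by_cases hl : l ∈ L
    · simp [interp, hl, Option.map_eq_some_iff] at h
    · simp [interp, hl] at h
  | arrow τ1 τ2 =>
    rw [interp_arrow_def] at h
    simp only [Option.bind_eq_some_iff, Option.map_eq_some_iff] at h
    obtain ⟨s, hs, t', ht', he⟩ := h
    cases he
  | const a => simp [interp] at h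
  | omega => simp [interp] at h
  | empty => simp [interp] at h
  | merge τ1 τ2 => simp [interp] at h

lemma interp_fld_inv {τ : Ty} {l : Nat} {u : TyC}
    (h : interp L τ = some (.ctor none (.ctor (some l) u))) :
    ∃ γ, τ = Ty.fld l γ ∧ l ∈ L ∧ interp L γ = some u := by
  cases τ with
  | fld l' σ =>
    by_cases hl : l' ∈ L
    · simp only [interp, hl, if_true, Option.map_eq_some_iff] at h
      obtain ⟨u', hu', he⟩ := h
      cases he
      exact ⟨σ, rfl, hl, hu'⟩
    · simp [interp, hl] at h
  | arrow τ1 τ2 =>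
    rw [interp_arrow_def] at h
    simp only [Option.bind_eq_some_iff, Option.map_eq_some_iff] at h
    obtain ⟨s, hs, t', ht', he⟩ := h
    cases he
  | inter τ1 τ2 =>
    rw [interp_inter_def] at h
    simp only [Option.bind_eq_some_iff, Option.map_eq_some_iff] at h
    obtain ⟨s, hs, t', ht', he⟩ := h
    cases he
  | const a => simp [interp] at h
  | omega => simp [interp] at h
  | empty => simp [interp] at h
  | merge τ1 τ2 => simp [interp] at h

lemma interp_omega_inv {τ : Ty} (h : interp L τ = some .omega) : τ = Ty.omega := by
  cases τ with
  | omega => rfl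
  | fld l σ =>
    by_cases hl : l ∈ L
    · simp [interp, hl, Option.map_eq_some_iff] at h
    · simp [interp, hl] at h
  | arrow τ1 τ2 =>
    rw [interp_arrow_def] at h
    simp only [Option.bind_eq_some_iff, Option.map_eq_some_iff] at h
    obtain ⟨s, hs, t', ht', he⟩ := h
    cases he
  | inter τ1 τ2 =>
    rw [interp_inter_def] at h
    simp only [Option.bind_eq_some_iff, Option.map_eq_some_iff] at h
    obtain ⟨s, hs, t', ht', he⟩ := h
    cases he
  | const a => simp [interp] at h
  | empty => simp [interp] at h
  | merge τ1 τ2 => simp [interp] at h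

/-- Every record type is a subtype of `⟨⟩`. -/
lemma isRec_le_empty {ρ : Ty} (h : IsRec ρ) : TySub ρ .empty := by
  induction h with
  | empty => exact .refl _
  | fld l σ => exact .fld_empty l σ
  | inter h1 h2 ih1 ih2 => exact .trans (.inter_left _ _) ih1
  | merge h1 h2 ih1 ih2 =>
    exact .trans (.merge_mono_l h1 .empty h2 ih1) (.trans (.merge_empty_l h2) ih2)

/-- The record type assigning `ω` to each key of a record. -/
def rTy : List (Nat × Tm) → Ty
  | [] => .empty
  | p :: R => .inter (.fld p.1 .omega) (rTy R)

lemma rTy_isRec : ∀ R : List (Nat × Tm), IsRec (rTy R)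
  | [] => .empty
  | _ :: R => .inter (.fld _ _) (rTy_isRec R)

lemma rTy_lbl : ∀ R : List (Nat × Tm), lbl (rTy R) = Tm.lblR R := by
  intro R
  induction R with
  | nil => simp [rTy, lbl, Tm.lblR, Tm.keys]
  | cons p R ih =>
    simp [rTy, lbl, ih, Tm.lblR, Tm.keys]

lemma lookup_mem {fs : List (Nat × Tm)} {p : Nat × Tm} (h : p ∈ fs) :
    ∃ M, List.lookup p.1 fs = some M := by
  induction fs with
  | nil => cases h
  | cons q fs ih =>
    by_cases he : p.1 = q.1
    · exact ⟨q.2, by simp [List.lookup, he]⟩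
    · have h' : p ∈ fs := by
        rcases List.mem_cons.1 h with rfl | h'
        · exact absurd rfl he
        · exact h'
      obtain ⟨M, hM⟩ := ih h'
      have hb : (p.1 == q.1) = false := by simp [he]
      exact ⟨M, by simp [List.lookup, hb, hM]⟩

lemma rTy_typing (Γ : List Ty) (fs : List (Nat × Tm)) :
    ∀ gs : List (Nat × Tm), (∀ p ∈ gs, p ∈ fs) → Typing Γ (.rcd fs) (rTy gs) := by
  intro gs
  induction gs with
  | nil => intro _; exact Typing.empty fs
  | cons p gs ih =>
    intro h
    obtain ⟨M, hM⟩ := lookup_mem (h p (by simp))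
    exact Typing.inter (Typing.rcd hM (Typing.omega M)) (ih fun q hq => h q (by simp [hq]))

lemma merge_rTy_le {l : Nat} {γ : Ty} :
    ∀ gs : List (Nat × Tm), l ∉ gs.map Prod.fst →
      TySub (.merge (.fld l γ) (rTy gs)) (.fld l γ) := by
  intro gs
  induction gs with
  | nil => intro _; exact TySub.merge_empty_r (.fld l γ)
  | cons p gs ih =>
    intro h
    rw [List.map_cons, List.mem_cons] at h
    push_neg at h
    obtain ⟨hne, hrest⟩ := h
    refine TySub.trans (TySub.fld_comm γ .omega hne (rTy_isRec gs)) ?_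
    exact TySub.trans (TySub.inter_right _ _) (ih hrest)

/-- Application of `Y` to a function of type `ω → A` has type `A`. -/
lemma ycomb_app_typing {Γ : List Ty} {A : Ty} {N : Tm} (h : Typing Γ N (.arrow .omega A)) :
    Typing Γ (.app Ycomb N) A := by
  refine Typing.app (σ := .arrow .omega A) ?_ h
  apply Typing.lam
  refine Typing.app (σ := .omega) ?_ (Typing.omega _)
  apply Typing.lam
  refine Typing.app (σ := .omega) (Typing.var rfl) (Typing.omega _)

/-- The mixin has type `(A → ⟨l:γ⟩) → (A → ⟨l:γ⟩)` for every label `l` not in `R`. -/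
lemma mixin_fld_typing {R : List (Nat × Tm)} {A γ : Ty} {l : Nat}
    (hl : l ∉ R.map Prod.fst) :
    Typing [] (mixinTm R) (.arrow (.arrow A (.fld l γ)) (.arrow A (.fld l γ))) := by
  apply Typing.lam
  apply ycomb_app_typing
  apply Typing.lam
  apply Typing.lam
  refine Typing.sub (σ := .merge (.fld l γ) (rTy R)) ?_ (merge_rTy_le R hl)
  refine Typing.merge ?_ (rTy_typing _ R R fun p hp => hp) (.fld l γ) (rTy_isRec R)
    (rTy_lbl R).symm
  exact Typing.app (Typing.var rfl) (Typing.var rfl)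

/-- Typing of the mixin at any interpretation preimage of a single substituted
label-polymorphic component of `τ_M`. -/
lemma mixin_single {R : List (Nat × Tm)} {l : Nat} {s u : TyC} {τ1 : Ty}
    (hl : l ∉ R.map Prod.fst)
    (h : interp L τ1 = some (.arrow (.arrow s (.ctor none (.ctor (some l) u)))
      (.arrow s (.ctor none (.ctor (some l) u))))) :
    Typing [] (mixinTm R) τ1 := by
  obtain ⟨A1, A2, rfl, h1, h2⟩ := interp_arrow_inv h
  obtain ⟨B1, B2, rfl, h3, h4⟩ := interp_arrow_inv h1
  obtain ⟨C1, C2, rfl, h5, h6⟩ := interp_arrow_inv h2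
  obtain ⟨γ, rfl, _, hγ⟩ := interp_fld_inv h4
  obtain ⟨δ, rfl, _, hδ⟩ := interp_fld_inv h6
  obtain rfl : B1 = C1 := interp_inj h3 h5
  obtain rfl : γ = δ := interp_inj hγ hδ
  exact mixin_fld_typing hl

lemma mixin_list {R : List (Nat × Tm)} (S : Nat → TyC) (s : TyC) :
    ∀ ls : List Nat, (∀ l ∈ ls, l ∉ R.map Prod.fst) → ∀ τb : Ty,
      interp L τb = some (substC S (interListC (ls.map fun l =>
        .arrow (.arrow s (.ctor none (.ctor (some l) (.tvar l))))
               (.arrow s (.ctor none (.ctor (some l) (.tvar l))))))) →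
      Typing [] (mixinTm R) τb := by
  intro ls
  induction ls with
  | nil =>
    intro _ τb hτb
    simp only [List.map_nil, interListC, substC] at hτb
    rw [interp_omega_inv hτb]
    exact Typing.omega _
  | cons l ls ih =>
    intro hmem τb hτb
    cases ls with
    | nil =>
      simp only [List.map_cons, List.map_nil, interListC, substC] at hτb
      exact mixin_single (hmem l (by simp)) hτb
    | cons l' ls' =>
      simp only [List.map_cons, interListC, substC] at hτb
      obtain ⟨τ1, τ2, rfl, h1, h2⟩ := interp_inter_inv hτb
      refine Typing.inter (mixin_single (hmem l (by simp)) h1) ?_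
      apply ih (fun x hx => hmem x (by simp [hx])) τ2
      simp only [List.map_cons, interListC, substC]
      exact h2

end Aux

/-- **Translation soundness for mixins.** Let `M ≡ λc.Y(λt.λs.(c s) ⊕ R)` be a
mixin and let `σ, ρ₁, ρ₂ ∈ 𝕋` be types on which `⟦·⟧` is defined (i.e. containing
neither `+` nor labels outside `𝓛`), with `ρ₁, ρ₂` record types,
`lbl(ρ₂) = lbl(R)`, and `⊢ M : (σ → ρ∩ρ₁) → (σ → ρ+ρ₂)` for every record type
`ρ`.  Then for every substitution `S` and every `τ ∈ 𝕋` with `⟦τ⟧ = S(τ_M)`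
(syntactically), the judgment `⊢ M : τ` is derivable in `Λ_R`. -/
theorem translation_soundness (L : Finset Nat) (R : List (Nat × Tm))
    (hnd : (R.map Prod.fst).Nodup) (hfv : ∀ p ∈ R, FVBelow 3 p.2)
    (σT ρ₁ ρ₂ : Ty) (hr₁ : IsRec ρ₁) (hr₂ : IsRec ρ₂)
    (σ' ρ₁' ρ₂' : TyC)
    (hσ : interp L σT = some σ')
    (hρ₁ : interp L ρ₁ = some ρ₁')
    (hρ₂ : interp L ρ₂ = some ρ₂')
    (hlbl : lbl ρ₂ = Tm.lblR R)
    (hstar : ∀ ρ : Ty, IsRec ρ →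
      Typing [] (mixinTm R)
        (.arrow (.arrow σT (.inter ρ ρ₁)) (.arrow σT (.merge ρ ρ₂))))
    (S : Nat → TyC) (τ : Ty)
    (hτ : interp L τ = some (substC S (tauM L R σ' ρ₁' ρ₂'))) :
    Typing [] (mixinTm R) τ := by
  simp only [tauM, substC] at hτ
  obtain ⟨τa, τb, rfl, ha, hb⟩ := interp_inter_inv hτ
  refine Typing.inter ?_ ?_
  · rw [interp_subst S σT σ' hσ, interp_subst S ρ₁ ρ₁' hρ₁, interp_subst S ρ₂ ρ₂' hρ₂] at ha
    have hconc : interp L (Ty.arrow (.arrow σT ρ₁) (.arrow σT ρ₂)) =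
        some (.arrow (.arrow σ' ρ₁') (.arrow σ' ρ₂')) := by
      simp [interp, hσ, hρ₁, hρ₂]
    obtain rfl : τa = Ty.arrow (.arrow σT ρ₁) (.arrow σT ρ₂) := interp_inj ha hconc
    refine Typing.sub (hstar .empty .empty) ?_
    exact TySub.arrow_mono
      (TySub.arrow_mono (.refl σT) (TySub.le_inter (isRec_le_empty hr₁) (.refl ρ₁)))
      (TySub.arrow_mono (.refl σT) (TySub.merge_empty_l hr₂))
  · refine mixin_list S σ' ((L \ Tm.lblR R).sort (· ≤ ·)) ?_ τb hb
    intro l hl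
    rw [Finset.mem_sort] at hl
    have := (Finset.mem_sdiff.1 hl).2
    simpa [Tm.lblR, Tm.keys, List.mem_toFinset] using this
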